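/- A submodular function f : 2^X → ℝ with f(∅) = 0 that is 'tight at the top' (f(X) = f(X∖{i}) for every i ∈ X) is monotone: A ⊆ B ⊆ X implies f(A) ≤ f(B). In particular every p-standardized submodular function is a tight polymatroid and is non-negative. -/
import Mathlib


open Finset

variable {α : Type*} [Fintype α] [DecidableEq α]

/-- A set function is submodular if `f(A)+f(B) ≥ f(A∩B)+f(A∪B)` for all `A,B`. -/
def Submodular (f : Finset α → ℝ) : Prop :=
  ∀ A B : Finset α, f (A ∩ B) + f (A ∪ B) ≤ f A + f B

/-- A pointed, tight-at-the-top submodular function is monotone, hence a tight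
polymatroid; in particular it is non-negative. -/
theorem pstandardized_monotone_nonneg (f : Finset α → ℝ)
    (hsub : Submodular f) (h0 : f ∅ = 0)
    (htight : ∀ i : α, f (Finset.univ.erase i) = f Finset.univ) :
    (∀ A B : Finset α, A ⊆ B → f A ≤ f B) ∧ (∀ A : Finset α, 0 ≤ f A) := by
  have key : ∀ (i : α) (S : Finset α), f S ≤ f (insert i S) := by
    intro i S
    by_cases hi : i ∈ S
    · simp [Finset.insert_eq_self.2 hi]
    · have h := hsub (insert i S) (Finset.univ.erase i)
      have hcap : (insert i S) ∩ (Finset.univ.erase i) = S := by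
        ext x
        simp only [Finset.mem_inter, Finset.mem_insert, Finset.mem_erase,
          Finset.mem_univ, and_true]
        constructor
        · rintro ⟨hx | hx, hne⟩
          · exact absurd hx hne
          · exact hx
        · intro hx
          exact ⟨Or.inr hx, fun hxi => hi (hxi ▸ hx)⟩
      have hcup : (insert i S) ∪ (Finset.univ.erase i) = Finset.univ := by
        ext x
        simp only [Finset.mem_union, Finset.mem_insert, Finset.mem_erase,
          Finset.mem_univ, and_true, iff_true]
        by_cases hxi : x = i
        · exact Or.inl (Or.inl hxi)
        · exact Or.inr hxi
      rw [hcap, hcup, htight i] at h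
      linarith
  have mono : ∀ (s A : Finset α), f A ≤ f (A ∪ s) := by
    intro s
    induction s using Finset.induction_on with
    | empty => simp
    | @insert a s ha ih =>
      intro A
      calc f A ≤ f (A ∪ s) := ih A
        _ ≤ f (insert a (A ∪ s)) := key a _
        _ = f (A ∪ insert a s) := by rw [Finset.union_insert]
  refine ⟨fun A B hAB => ?_, fun A => ?_⟩
  · have := mono B A
    rwa [Finset.union_eq_right.2 hAB] at this
  · have := mono A ∅
    simpa [h0] using this
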